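/- Let γ > 1, let g and Q > 0 be real numbers, let y₀ ∈ ℝ, and let p, t : ℝ → ℝ be differentiable at y₀ with p(y₀) > 0 and t(y₀) > 0. Set ρ₀ := γ·p(y₀)/(t(y₀)·Q²), define p⁺(y) := (2γ/(γ+1))·p(y)/t(y) − ((γ−1)/(γ+1))·p(y), and set ρ⁺₀ := (γ+1)·ρ₀/(γ−1+2t(y₀)). Assume p'(y₀) = −ρ₀·g and (p⁺)'(y₀) = −ρ⁺₀·g. Then the function y ↦ γ·p(y)/t(y) is differentiable at y₀ with derivative −((γ−1)/2)·(1 + ((γ+1)²/(γ−1)²)·1/(1 + 2t(y₀)/(γ−1)))·ρ₀·g. -/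

import Mathlib

open Real Set

/-- Formula for the derivative of the momentum quantity `ρ⁻q⁻² = γp/t`:
with `ρ₀ = γp(y₀)/(t(y₀)Q²)`, `p⁺ = (2γ/(γ+1))p/t − ((γ−1)/(γ+1))p`,
`ρ⁺₀ = (γ+1)ρ₀/(γ−1+2t(y₀))`, and assuming `p'(y₀) = −ρ₀g` and
`(p⁺)'(y₀) = −ρ⁺₀g`, one gets
`(γp/t)'(y₀) = −((γ−1)/2)·(1 + ((γ+1)²/(γ−1)²)·1/(1 + 2t(y₀)/(γ−1)))·ρ₀g`. -/
theorem momentum_derivative_formula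
    (γ g Q y₀ : ℝ) (p t : ℝ → ℝ) (hγ : 1 < γ) (hQ : 0 < Q)
    (hpd : DifferentiableAt ℝ p y₀) (htd : DifferentiableAt ℝ t y₀)
    (hp0 : 0 < p y₀) (ht0 : 0 < t y₀)
    (hp' : deriv p y₀ = -(γ * p y₀ / (t y₀ * Q ^ 2)) * g)
    (hpp' : deriv (fun y => 2 * γ / (γ + 1) * p y / t y - (γ - 1) / (γ + 1) * p y) y₀
      = -((γ + 1) * (γ * p y₀ / (t y₀ * Q ^ 2)) / (γ - 1 + 2 * t y₀)) * g) :
    HasDerivAt (fun y => γ * p y / t y)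
      (-((γ - 1) / 2) *
        (1 + (γ + 1) ^ 2 / (γ - 1) ^ 2 * (1 / (1 + 2 * t y₀ / (γ - 1)))) *
        (γ * p y₀ / (t y₀ * Q ^ 2)) * g) y₀ := by
  have htne : t y₀ ≠ 0 := ne_of_gt ht0
  have hγ1 : γ + 1 ≠ 0 := by linarith
  have hγ2 : γ - 1 ≠ 0 := by linarith
  have hγ0 : γ ≠ 0 := by linarith
  have hQne : Q ≠ 0 := ne_of_gt hQ
  have hγm : (0:ℝ) < γ - 1 := by linarith
  have hden : γ - 1 + 2 * t y₀ ≠ 0 := by nlinarith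
  have hden2 : 1 + 2 * t y₀ / (γ - 1) ≠ 0 := by
    have : 0 < 2 * t y₀ / (γ - 1) := by positivity
    linarith
  set d : ℝ := (deriv p y₀ * t y₀ - p y₀ * deriv t y₀) / t y₀ ^ 2 with hd
  have hq : HasDerivAt (fun y => p y / t y) d y₀ :=
    hpd.hasDerivAt.div htd.hasDerivAt htne
  have hcomb : HasDerivAt (fun y => 2 * γ / (γ + 1) * p y / t y - (γ - 1) / (γ + 1) * p y)
      (2 * γ / (γ + 1) * d - (γ - 1) / (γ + 1) * deriv p y₀) y₀ := by
    have h1 : HasDerivAt (fun y => 2 * γ / (γ + 1) * (p y / t y)) (2 * γ / (γ + 1) * d) y₀ :=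
      hq.const_mul _
    have h2 : HasDerivAt (fun y => (γ - 1) / (γ + 1) * p y)
        ((γ - 1) / (γ + 1) * deriv p y₀) y₀ := hpd.hasDerivAt.const_mul _
    have h3 := h1.sub h2
    refine h3.congr_of_eventuallyEq (Filter.Eventually.of_forall fun y => ?_)
    simp only [Pi.sub_apply]; ring
  have heq : 2 * γ / (γ + 1) * d - (γ - 1) / (γ + 1) * deriv p y₀
      = -((γ + 1) * (γ * p y₀ / (t y₀ * Q ^ 2)) / (γ - 1 + 2 * t y₀)) * g := by
    rw [← hcomb.deriv]; exact hpp'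
  rw [hp'] at heq
  have hdval : γ * d = -((γ - 1) / 2) *
      (1 + (γ + 1) ^ 2 / (γ - 1) ^ 2 * (1 / (1 + 2 * t y₀ / (γ - 1)))) *
      (γ * p y₀ / (t y₀ * Q ^ 2)) * g := by
    have hA : (2 : ℝ) * γ / (γ + 1) ≠ 0 := by
      apply div_ne_zero _ hγ1
      positivity
    have hd' : d = ((γ + 1) / (2 * γ)) *
        (-((γ + 1) * (γ * p y₀ / (t y₀ * Q ^ 2)) / (γ - 1 + 2 * t y₀)) * g
          + (γ - 1) / (γ + 1) * (-(γ * p y₀ / (t y₀ * Q ^ 2)) * g)) := by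
      field_simp at heq ⊢
      linarith
    rw [hd']
    field_simp
    ring
  have hgoal : HasDerivAt (fun y => γ * (p y / t y)) (γ * d) y₀ := hq.const_mul γ
  rw [hdval] at hgoal
  convert hgoal using 2 with y
  ring
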